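/- Consider the anti-windup approximation ż ∈ F_K(z) := f(z, P_Z(z)) − (1/K)·G⁻¹(P_Z(z))(z − P_Z(z)) and a point z₀ ∈ Z at which the local assumption holds with constants M, ν, μ, α, ε > 0. Given any T > 0 and any sequence K_n → 0⁺, any sequence {z_n} of (T, ε)-truncated solutions of the anti-windup approximation with K = K_n and z_n(0) = z₀ has a subsequence whose graphs converge in the Painlevé–Kuratowski sense (i.e., the subsequence converges graphically). -/

import Mathlib

open Metric Set Filter Topology MeasureTheory Pointwise
open scoped RealInnerProductSpace

noncomputable section

/-- Euclidean space `ℝⁿ`. -/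
abbrev Euc (n : ℕ) := EuclideanSpace ℝ (Fin n)

/-- Continuous linear operators on `ℝⁿ` (playing the role of `n × n` matrices). -/
abbrev EucOp (n : ℕ) := Euc n →L[ℝ] Euc n

variable {n : ℕ}

/-- The set of nearest points of `C` to `x` (the Euclidean projection `P_C(x)`). -/
def projSet (C : Set (Euc n)) (x : Euc n) : Set (Euc n) :=
  {c | c ∈ C ∧ dist x c = Metric.infDist x C}

/-- The (Bouligand) tangent cone to `C` at `x`, via sequences:
`v = lim (xk - x)/δk` with `xk ∈ C`, `xk → x`, `δk → 0⁺`. -/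
def tanCone (C : Set (Euc n)) (x : Euc n) : Set (Euc n) :=
  {v | ∃ (xk : ℕ → Euc n) (δk : ℕ → ℝ),
    (∀ k, xk k ∈ C) ∧ Filter.Tendsto xk Filter.atTop (nhds x) ∧
    (∀ k, 0 < δk k) ∧ Filter.Tendsto δk Filter.atTop (nhds 0) ∧
    Filter.Tendsto (fun k => (δk k)⁻¹ • (xk k - x)) Filter.atTop (nhds v)}

/-- Clarke regularity: sequential inner semicontinuity of the tangent-cone map on `C`. -/
def ClarkeRegular (C : Set (Euc n)) : Prop :=
  ∀ x ∈ C, ∀ v ∈ tanCone C x, ∀ xk : ℕ → Euc n,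
    (∀ k, xk k ∈ C) → Filter.Tendsto xk Filter.atTop (nhds x) →
    ∃ vk : ℕ → Euc n, (∀ k, vk k ∈ tanCone C (xk k)) ∧
      Filter.Tendsto vk Filter.atTop (nhds v)

/-- The Euclidean normal cone `N_xC`, the polar of the tangent cone. -/
def normalCone (C : Set (Euc n)) (x : Euc n) : Set (Euc n) :=
  {η | ∀ v ∈ tanCone C x, ⟪η, v⟫ ≤ 0}

/-- `C` is `α`-prox-regular at `x`: every normal vector at `x` is `α`-proximal. -/
def ProxRegularAt (C : Set (Euc n)) (α : ℝ) (x : Euc n) : Prop :=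
  ∀ η ∈ normalCone C x, ∀ y ∈ C, ⟪η, y - x⟫ ≤ α * ‖η‖ * ‖y - x‖ ^ 2

/-- `C` is `α`-prox-regular: Clarke regular and `α`-prox-regular at every point. -/
def ProxRegular (C : Set (Euc n)) (α : ℝ) : Prop :=
  ClarkeRegular C ∧ ∀ x ∈ C, ProxRegularAt C α x

/-- `G` is a (continuous) metric on `C`: continuous, symmetric, positive definite. -/
def IsMetricOn (C : Set (Euc n)) (G : Euc n → EucOp n) : Prop :=
  ContinuousOn G C ∧
    ∀ x ∈ C, (∀ u v : Euc n, ⟪G x u, v⟫ = ⟪u, G x v⟫) ∧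
      ∀ u : Euc n, u ≠ 0 → 0 < ⟪u, G x u⟫

/-- The inner product `⟨u, v⟩_{G(x)} := uᵀ G(x) v` induced by an operator `Gx`. -/
def innerG (Gx : EucOp n) (u v : Euc n) : ℝ := ⟪u, Gx v⟫

/-- The norm `‖u‖_{G(x)}` induced by an operator `Gx`. -/
def normG (Gx : EucOp n) (u : Euc n) : ℝ := Real.sqrt (innerG Gx u u)

/-- The `G`-normal cone `N^G_xC`. -/
def normalConeG (C : Set (Euc n)) (G : Euc n → EucOp n) (x : Euc n) : Set (Euc n) :=
  {η | ∀ v ∈ tanCone C x, innerG (G x) η v ≤ 0}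

/-- The projection `Π^G_C[w](x)`: minimizers of `‖v - w‖_{G(x)}` over the tangent cone. -/
def projTanG (C : Set (Euc n)) (G : Euc n → EucOp n) (w x : Euc n) : Set (Euc n) :=
  {v | v ∈ tanCone C x ∧ ∀ u ∈ tanCone C x, normG (G x) (v - w) ≤ normG (G x) (u - w)}

/-- The Euclidean projection onto the tangent cone, `Π_C[w](x)` (identity metric). -/
def projTanI (C : Set (Euc n)) (w x : Euc n) : Set (Euc n) :=
  {v | v ∈ tanCone C x ∧ ∀ u ∈ tanCone C x, ‖v - w‖ ≤ ‖u - w‖}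

/-- `z` is a Carathéodory solution of `ż ∈ H(z)`, `z ∈ C`, on `[0,T]`, with (a.e.)
derivative `v`: absolute continuity is encoded by the integral representation. -/
def SolutionVia (H : Euc n → Set (Euc n)) (C : Set (Euc n)) (T : ℝ)
    (z v : ℝ → Euc n) : Prop :=
  (∀ t ∈ Set.Icc (0:ℝ) T, z t ∈ C) ∧
  MeasureTheory.IntegrableOn v (Set.Icc (0:ℝ) T) ∧
  (∀ᵐ t ∂(MeasureTheory.volume.restrict (Set.Icc (0:ℝ) T)), v t ∈ H (z t)) ∧
  (∀ t ∈ Set.Icc (0:ℝ) T, z t = z 0 + ∫ s in (0:ℝ)..t, v s)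

/-- `z` is a Carathéodory solution of `ż ∈ H(z)`, `z ∈ C`, on `[0,T]`. -/
def IsSolutionOn (H : Euc n → Set (Euc n)) (C : Set (Euc n)) (T : ℝ)
    (z : ℝ → Euc n) : Prop :=
  ∃ v : ℝ → Euc n, SolutionVia H C T z v

/-- `z : [0,T'] → ℝⁿ` is a `(T, ε)`-truncated solution of `ż ∈ H(z)`, `z ∈ C`,
with initial condition `z₀`. -/
def IsTruncSol (H : Euc n → Set (Euc n)) (C : Set (Euc n)) (T ε : ℝ) (z₀ : Euc n)
    (T' : ℝ) (z : ℝ → Euc n) : Prop :=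
  0 ≤ T' ∧ T' ≤ T ∧ IsSolutionOn H C T' z ∧ z 0 = z₀ ∧
  (∀ t ∈ Set.Icc (0:ℝ) T', ‖z t - z₀‖ ≤ ε) ∧ (T' = T ∨ ‖z T' - z₀‖ = ε)

/-- A complete solution: a solution on every compact interval `[0,T]`. -/
def IsCompleteSol (H : Euc n → Set (Euc n)) (C : Set (Euc n)) (z : ℝ → Euc n) : Prop :=
  ∀ T : ℝ, 0 ≤ T → IsSolutionOn H C T z

/-- The graph of a map defined on `[0,T']`, as a subset of `ℝ × ℝⁿ`. -/
def graphOn (T' : ℝ) (z : ℝ → Euc n) : Set (ℝ × Euc n) :=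
  {p | p.1 ∈ Set.Icc (0:ℝ) T' ∧ p.2 = z p.1}

/-- Painlevé–Kuratowski convergence of a sequence of sets to `L`:
`L` is contained in the inner limit and contains the outer limit. -/
def KuratowskiTendsto {X : Type*} [TopologicalSpace X] (A : ℕ → Set X) (L : Set X) : Prop :=
  (∀ x ∈ L, ∀ U ∈ nhds x, ∀ᶠ i in Filter.atTop, (A i ∩ U).Nonempty) ∧
  (∀ x : X, (∀ U ∈ nhds x, ∃ᶠ i in Filter.atTop, (A i ∩ U).Nonempty) → x ∈ L)

/-- The enlarged set `Z°_α := Z + (1/(2α))·int 𝔹` on which the projection is single-valued. -/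
def ZballSet (Z : Set (Euc n)) (α : ℝ) : Set (Euc n) :=
  Z + Metric.ball (0 : Euc n) (1 / (2 * α))

/-- The anti-windup approximation vector field
`F_K(z) = f(z, P_Z(z)) − (1/K)·G⁻¹(P_Z(z))(z − P_Z(z))`, as a set-valued map. -/
def AWA (f : Euc n → Euc n → Euc n) (Ginv : Euc n → EucOp n) (Z : Set (Euc n)) (K : ℝ)
    (z : Euc n) : Set (Euc n) :=
  (fun zb => f z zb - K⁻¹ • Ginv zb (z - zb)) '' projSet Z z

/-- The special anti-windup vector field `F_K(z) = f(P_Z(z)) − (1/K)·G⁻¹(P_Z(z))(z − P_Z(z))`. -/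
def AWAspec (f : Euc n → Euc n) (Ginv : Euc n → EucOp n) (Z : Set (Euc n)) (K : ℝ)
    (z : Euc n) : Set (Euc n) :=
  (fun zb => f zb - K⁻¹ • Ginv zb (z - zb)) '' projSet Z z

/-- `Ginv` is a pointwise (two-sided) inverse of `G` on `Z`. -/
def InverseOn (G Ginv : Euc n → EucOp n) (Z : Set (Euc n)) : Prop :=
  ∀ x ∈ Z, (∀ u : Euc n, G x (Ginv x u) = u) ∧ (∀ u : Euc n, Ginv x (G x u) = u)

/-- A function of class `K∞` on `[0,∞)`. -/
def ClassKInf (ω : ℝ → ℝ) : Prop :=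
  ContinuousOn ω (Set.Ici (0:ℝ)) ∧ StrictMonoOn ω (Set.Ici (0:ℝ)) ∧
  (∀ M : ℝ, ∃ r : ℝ, 0 ≤ r ∧ M ≤ ω r) ∧ ω 0 = 0 ∧ ∀ r : ℝ, 0 ≤ r → 0 ≤ ω r

/-- A function of class `KL` on `[0,∞)²`. -/
def ClassKL (β : ℝ → ℝ → ℝ) : Prop :=
  (∀ r s : ℝ, 0 ≤ r → 0 ≤ s → 0 ≤ β r s) ∧
  (∀ s : ℝ, 0 ≤ s → MonotoneOn (fun r => β r s) (Set.Ici (0:ℝ))) ∧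
  (∀ r : ℝ, 0 ≤ r → AntitoneOn (β r) (Set.Ici (0:ℝ))) ∧
  (∀ s : ℝ, 0 ≤ s → Filter.Tendsto (fun r => β r s) (nhdsWithin 0 (Set.Ioi 0)) (nhds 0)) ∧
  (∀ r : ℝ, 0 ≤ r → Filter.Tendsto (β r) Filter.atTop (nhds 0))

/-- The local assumption (Assumption 3.3) at `z₀ ∈ Z` with constants `M, ν, μ, α, ε`. -/
def LocalAssumption (Z : Set (Euc n)) (f : Euc n → Euc n → Euc n) (Ginv : Euc n → EucOp n)
    (z₀ : Euc n) (M ν μ α ε : ℝ) : Prop :=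
  (0 < M ∧ 0 < ν ∧ 0 < μ ∧ 0 < α ∧ 0 < ε) ∧
  (∀ z ∈ Metric.closedBall z₀ ε ∩ ZballSet Z α, ∀ zb ∈ projSet Z z, ‖f z zb‖ ≤ M) ∧
  (∀ z ∈ Metric.closedBall z₀ ε ∩ ZballSet Z α, ∀ zb ∈ projSet Z z, ∀ u : Euc n,
    μ * ‖u‖ ^ 2 ≤ ⟪u, Ginv zb u⟫ ∧ ⟪u, Ginv zb u⟫ ≤ ν * ‖u‖ ^ 2) ∧
  (∀ x ∈ Metric.closedBall z₀ ε ∩ Z, ProxRegularAt Z α x)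

/-- The alternate-form vector field `F̂(z) = f(z, P_Z(z)) − N^G_zZ ∩ γ𝔹` (for `z ∈ Z`). -/
def FhatMap (f : Euc n → Euc n → Euc n) (G : Euc n → EucOp n) (Z : Set (Euc n)) (γ : ℝ)
    (z : Euc n) : Set (Euc n) :=
  (fun η => f z z - η) '' {η | η ∈ normalConeG Z G z ∧ ‖η‖ ≤ γ}

/-- The `σ`-perturbation `H_σ(x) := cl co H((x + σ𝔹) ∩ C) + σ𝔹` of a set-valued map. -/
def perturbMap (H : Euc n → Set (Euc n)) (C : Set (Euc n)) (σ : ℝ) (x : Euc n) :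
    Set (Euc n) :=
  closure (convexHull ℝ (⋃ y ∈ Metric.closedBall x σ ∩ C, H y)) +
    Metric.closedBall (0 : Euc n) σ

end

/-- cf. Lemma 4.1: any sequence of `(T, ε)`-truncated solutions of the
anti-windup approximations with gains `Kₙ → 0⁺` has a graphically convergent subsequence. -/
theorem stmt9 {n : ℕ} (Z : Set (Euc n)) (hZcl : IsClosed Z)
    (f : Euc n → Euc n → Euc n)
    (hf : ContinuousOn (fun p : Euc n × Euc n => f p.1 p.2) (Set.univ ×ˢ Z))
    (G Ginv : Euc n → EucOp n) (hG : IsMetricOn Z G) (hGinv : ContinuousOn Ginv Z)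
    (hInv : InverseOn G Ginv Z)
    (z₀ : Euc n) (hz₀ : z₀ ∈ Z)
    (M ν μ α ε : ℝ) (hloc : LocalAssumption Z f Ginv z₀ M ν μ α ε)
    (T : ℝ) (hT : 0 < T)
    (K : ℕ → ℝ) (hKpos : ∀ i, 0 < K i) (hKlim : Filter.Tendsto K Filter.atTop (nhds 0))
    (T' : ℕ → ℝ) (z : ℕ → ℝ → Euc n)
    (hsol : ∀ i, IsTruncSol (AWA f Ginv Z (K i)) Set.univ T ε z₀ (T' i) (z i)) :
    ∃ φ : ℕ → ℕ, StrictMono φ ∧ ∃ L : Set (ℝ × Euc n),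
      KuratowskiTendsto (fun i => graphOn (T' (φ i)) (z (φ i))) L := by
  classical
  set Kset : Set (ℝ × Euc n) := Set.Icc (0:ℝ) T ×ˢ Metric.closedBall z₀ ε with hKsetdef
  have hKcomp : IsCompact Kset := isCompact_Icc.prod (isCompact_closedBall _ _)
  -- each graph is compact, nonempty and contained in Kset
  have hgraph : ∀ i, IsCompact (graphOn (T' i) (z i)) ∧ (graphOn (T' i) (z i)).Nonempty ∧
      graphOn (T' i) (z i) ⊆ Kset := by
    intro i
    obtain ⟨hT'0, hT'T, ⟨v, _, hint, _, heq⟩, hz0, hball, _⟩ := hsol i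
    have hcont : ContinuousOn (z i) (Set.Icc 0 (T' i)) := by
      have h1 : ContinuousOn (fun t => z i 0 + ∫ s in (0:ℝ)..t, v s) (Set.Icc 0 (T' i)) := by
        have h2 := intervalIntegral.continuousOn_primitive_interval (a := (0:ℝ)) (b := T' i)
          (μ := MeasureTheory.volume) (f := v) (by rwa [Set.uIcc_of_le hT'0])
        rw [Set.uIcc_of_le hT'0] at h2
        exact continuousOn_const.add h2
      exact h1.congr heq
    have himg : graphOn (T' i) (z i) = (fun t => (t, z i t)) '' Set.Icc 0 (T' i) := by
      ext p
      constructor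
      · rintro ⟨h1, h2⟩
        refine ⟨p.1, h1, ?_⟩
        show (p.1, z i p.1) = p
        rw [← h2]
      · rintro ⟨t, ht, rfl⟩
        exact ⟨ht, rfl⟩
    refine ⟨?_, ⟨(0, z i 0), ⟨⟨le_refl _, hT'0⟩, rfl⟩⟩, ?_⟩
    · rw [himg]
      exact isCompact_Icc.image_of_continuousOn (continuousOn_id.prodMk hcont)
    · rintro p ⟨h1, h2⟩
      refine ⟨⟨h1.1, h1.2.trans hT'T⟩, ?_⟩
      rw [Metric.mem_closedBall, h2, dist_eq_norm]
      exact hball p.1 h1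
  haveI : CompactSpace Kset := isCompact_iff_compactSpace.mp hKcomp
  -- lift the graphs to nonempty compacts of the compact subtype
  have hSmk : ∀ i, IsCompact (Subtype.val ⁻¹' graphOn (T' i) (z i) : Set Kset) := by
    intro i
    exact (((hgraph i).1.isClosed).preimage continuous_subtype_val).isCompact
  have hSne : ∀ i, (Subtype.val ⁻¹' graphOn (T' i) (z i) : Set Kset).Nonempty := by
    intro i
    obtain ⟨p, hp⟩ := (hgraph i).2.1
    exact ⟨⟨p, (hgraph i).2.2 hp⟩, hp⟩
  set S : ℕ → TopologicalSpace.NonemptyCompacts Kset :=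
    fun i => ⟨⟨Subtype.val ⁻¹' graphOn (T' i) (z i), hSmk i⟩, hSne i⟩ with hSdef
  have hSval : ∀ i, Subtype.val '' (S i : Set Kset) = graphOn (T' i) (z i) := by
    intro i
    rw [hSdef]
    simp only [TopologicalSpace.NonemptyCompacts.coe_mk, TopologicalSpace.Compacts.coe_mk]
    rw [Subtype.image_preimage_coe]
    exact Set.inter_eq_right.mpr (hgraph i).2.2
  obtain ⟨L₀, -, φ, hφ, hconv⟩ := isCompact_univ.tendsto_subseq (x := S) (fun i => Set.mem_univ _)
  have hconv' : ∀ δ > (0:ℝ), ∃ N, ∀ i ≥ N,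
      Metric.hausdorffDist ((S (φ i)) : Set Kset) (L₀ : Set Kset) < δ := by
    intro δ hδ
    obtain ⟨N, hN⟩ := Metric.tendsto_atTop.mp hconv δ hδ
    exact ⟨N, fun i hi => by
      have := hN i hi
      rwa [Metric.NonemptyCompacts.dist_eq] at this⟩
  have hfin : ∀ i, EMetric.hausdorffEdist ((S (φ i)) : Set Kset) (L₀ : Set Kset) ≠ ⊤ :=
    fun i => Metric.hausdorffEdist_ne_top_of_nonempty_of_bounded (S (φ i)).nonempty L₀.nonempty
      (S (φ i)).isCompact.isBounded L₀.isCompact.isBounded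
  refine ⟨φ, hφ, Subtype.val '' (L₀ : Set Kset), ?_, ?_⟩
  · -- inner limit condition
    rintro x ⟨x', hx'L, rfl⟩ U hU
    obtain ⟨r, hr, hballU⟩ := Metric.mem_nhds_iff.mp hU
    obtain ⟨N, hN⟩ := hconv' r hr
    refine Filter.eventually_atTop.mpr ⟨N, fun i hi => ?_⟩
    obtain ⟨y, hyS, hxy⟩ :=
      Metric.exists_dist_lt_of_hausdorffDist_lt' hx'L (hN i hi) (hfin i)
    refine ⟨(y : ℝ × Euc n), ?_, ?_⟩
    · show (y : ℝ × Euc n) ∈ graphOn (T' (φ i)) (z (φ i))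
      rw [← hSval (φ i)]; exact ⟨y, hyS, rfl⟩
    · apply hballU
      rw [Metric.mem_ball]
      rw [Subtype.dist_eq] at hxy
      exact hxy
  · -- outer limit condition
    intro x hx
    have hLne : (Subtype.val '' (L₀ : Set Kset)).Nonempty := L₀.nonempty.image _
    have hLcl : IsClosed (Subtype.val '' (L₀ : Set Kset)) :=
      (L₀.isCompact.image continuous_subtype_val).isClosed
    have key : ∀ δ > (0:ℝ), Metric.infDist x (Subtype.val '' (L₀ : Set Kset)) ≤ 2 * δ := by
      intro δ hδ
      obtain ⟨N, hN⟩ := hconv' δ hδ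
      have hfreq := hx (Metric.ball x δ) (Metric.ball_mem_nhds x hδ)
      obtain ⟨i, ⟨⟨a, haG, haB⟩, hiN⟩⟩ :=
        (hfreq.and_eventually (Filter.eventually_ge_atTop N)).exists
      have haK : a ∈ Kset := (hgraph (φ i)).2.2 haG
      have haS : (⟨a, haK⟩ : Kset) ∈ (S (φ i) : Set Kset) := haG
      obtain ⟨b, hbL, hab⟩ :=
        Metric.exists_dist_lt_of_hausdorffDist_lt haS (hN i hiN) (hfin i)
      have hmem : (b : ℝ × Euc n) ∈ Subtype.val '' (L₀ : Set Kset) := ⟨b, hbL, rfl⟩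
      calc Metric.infDist x (Subtype.val '' (L₀ : Set Kset))
          ≤ dist x (b : ℝ × Euc n) := Metric.infDist_le_dist_of_mem hmem
        _ ≤ dist x a + dist a (b : ℝ × Euc n) := dist_triangle _ _ _
        _ ≤ 2 * δ := by
            rw [Metric.mem_ball] at haB
            rw [Subtype.dist_eq] at hab
            rw [dist_comm] at haB
            linarith [le_of_lt haB, le_of_lt hab]
    have h0 : Metric.infDist x (Subtype.val '' (L₀ : Set Kset)) = 0 := by
      by_contra h
      have hpos : 0 < Metric.infDist x (Subtype.val '' (L₀ : Set Kset)) :=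
        lt_of_le_of_ne Metric.infDist_nonneg (Ne.symm h)
      have := key (Metric.infDist x (Subtype.val '' (L₀ : Set Kset)) / 4) (by linarith)
      linarith
    exact (hLcl.mem_iff_infDist_zero hLne).mpr h0
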